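/- For every nonnegative integer n the following five equalities hold: (1) the number of P in S_n whose last letter is h equals the number of Q in F_n whose last step is (0,1); (2) the number of P in S_n whose last two letters are u,d equals the number of Q in F_n whose last step is (1,1); (3) the number of P in S_n whose last two letters are h,d equals the number of Q in F_n whose last step is (a,1) for some a ≥ 2; (4) the number of P in S_n whose last three letters are u,d,d equals the number of Q in F_n whose last step is (1,b) for some b ≤ 0; (5) the number of P in S_n whose last three letters are h,d,d equals the number of Q in F_n whose last step is (a,b) for some a ≥ 2 and b ≤ 0. Consequently |S_n| = |F_n|. -/

import Mathlib

/-- An `F`-step: `(0,1)` or `(a,b)` with `a ≥ 1` and `b ≤ 1`. -/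
def IsFStep (s : ℤ × ℤ) : Prop := s = (0, 1) ∨ (1 ≤ s.1 ∧ s.2 ≤ 1)

/-- An `F`-path: a sequence of `F`-steps whose prefix sums satisfy
`a_1 + ⋯ + a_i ≤ b_1 + ⋯ + b_i`. -/
def IsFPath (Q : List (ℤ × ℤ)) : Prop :=
  (∀ s ∈ Q, IsFStep s) ∧
  ∀ i : ℕ, ((Q.take i).map Prod.fst).sum ≤ ((Q.take i).map Prod.snd).sum

/-- The set of `F`-paths of length `n`. -/
def FPaths (n : ℕ) : Set (List (ℤ × ℤ)) := {Q | Q.length = n ∧ IsFPath Q}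

def fheight (Q : List (ℤ × ℤ)) : ℤ := (Q.map Prod.snd).sum - (Q.map Prod.fst).sum

def fnorth (Q : List (ℤ × ℤ)) : ℕ := Q.countP (fun s => decide (s = ((0 : ℤ), (1 : ℤ))))

def faone (Q : List (ℤ × ℤ)) : ℕ := Q.countP (fun s => decide (s.1 = 1))

def fbone (Q : List (ℤ × ℤ)) : ℕ := Q.countP (fun s => decide (s.2 = 1))

/-- Steps of a Schröder path. -/
inductive SStep : Type
  | u | d | h
deriving DecidableEq

/-- The width of a Schröder step. -/
def swidth : SStep → ℕ
  | .u => 1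
  | .d => 1
  | .h => 2

/-- The height-change of a Schröder step. -/
def shc : SStep → ℤ
  | .u => 1
  | .d => -1
  | .h => 0

/-- A Schröder path of semilength `n`. -/
def IsSchroder (n : ℕ) (P : List SStep) : Prop :=
  (P.map swidth).sum = 2 * n ∧ (P.map shc).sum = 0 ∧
  ∀ i : ℕ, 0 ≤ ((P.take i).map shc).sum

/-- Schröder paths of semilength `n` without triple descents. -/
def SchP (n : ℕ) : Set (List SStep) :=
  {P | IsSchroder n P ∧ ¬ [SStep.d, SStep.d, SStep.d] <:+: P}

/-- Number of `h` letters preceded by a prefix of total height-change `0`. -/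
noncomputable def scomp (P : List SStep) : ℕ :=
  Set.ncard {i : ℕ | P[i]? = some SStep.h ∧ ((P.take i).map shc).sum = 0}

/-- Number of `h` letters plus number of double descents. -/
noncomputable def shdd (P : List SStep) : ℕ :=
  P.countP (fun s => decide (s = SStep.h)) +
    Set.ncard {i : ℕ | P[i]? = some SStep.d ∧ P[i + 1]? = some SStep.d}

/-- Number of peaks `ud`. -/
noncomputable def speak (P : List SStep) : ℕ :=
  Set.ncard {i : ℕ | P[i]? = some SStep.u ∧ P[i + 1]? = some SStep.d}

/-- Steps of a bicolored Dyck path: up, red down, black down. -/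
inductive BStep : Type
  | u | dR | dB
deriving DecidableEq

/-- A restricted bicolored Dyck path of semilength `n`:
`u^{i_1} dR^{j_1} dB^{k_1} ⋯ u^{i_{ℓ-1}} dR^{j_{ℓ-1}} dB^{k_{ℓ-1}} u^{i_ℓ} dR^{j_ℓ}`
with positive `i`'s and `k`'s, `∑ i = n`, `∑ j + ∑ k = n`, and every prefix having
at least as many `u`'s as down steps. -/
def IsRBD (n : ℕ) (B : List BStep) : Prop :=
  (∃ (blocks : List (ℕ × ℕ × ℕ)) (iL jL : ℕ),
    (∀ t ∈ blocks, 1 ≤ t.1 ∧ 1 ≤ t.2.2) ∧ 1 ≤ iL ∧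
    B = (blocks.map (fun t =>
        List.replicate t.1 BStep.u ++ List.replicate t.2.1 BStep.dR ++
          List.replicate t.2.2 BStep.dB)).flatten ++
        (List.replicate iL BStep.u ++ List.replicate jL BStep.dR) ∧
    (blocks.map (fun t => t.1)).sum + iL = n ∧
    (blocks.map (fun t => t.2.1)).sum + jL + (blocks.map (fun t => t.2.2)).sum = n) ∧
  ∀ i : ℕ, (B.take i).countP (fun s => decide (s ≠ BStep.u)) ≤
    (B.take i).countP (fun s => decide (s = BStep.u))

/-- The length of the final run of red down steps. -/
def blast (B : List BStep) : ℕ := (B.reverse.takeWhile (fun s => decide (s = BStep.dR))).length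

/-- The number of double ascents `uu`. -/
noncomputable def bdasc (B : List BStep) : ℕ :=
  Set.ncard {i : ℕ | B[i]? = some BStep.u ∧ B[i + 1]? = some BStep.u}

/-- The number of occurrences of `u dB u` or `dR dB u`. -/
noncomputable def bbval (B : List BStep) : ℕ :=
  Set.ncard {i : ℕ | (B[i]? = some BStep.u ∨ B[i]? = some BStep.dR) ∧
    B[i + 1]? = some BStep.dB ∧ B[i + 2]? = some BStep.u}

/-- `π : ℕ → ℕ` encodes a permutation of `{1,…,N}`, with value `0` outside
(in particular `π 0 = 0`). -/
def IsPermOn (N : ℕ) (π : ℕ → ℕ) : Prop :=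
  Set.BijOn π (Set.Icc 1 N) (Set.Icc 1 N) ∧ ∀ i, i ∉ Set.Icc 1 N → π i = 0

/-- `π` contains the pattern given by the word `σ`. -/
def ContainsPat (N : ℕ) (π : ℕ → ℕ) (σ : List ℕ) : Prop :=
  ∃ f : Fin σ.length → ℕ, StrictMono f ∧ (∀ t, f t ∈ Set.Icc 1 N) ∧
    ∀ s t : Fin σ.length, π (f s) < π (f t) ↔ σ.get s < σ.get t

/-- Permutations of `{1,…,N}` avoiding the patterns `2341`, `2431` and `3241`. -/
def PermSet (N : ℕ) : Set (ℕ → ℕ) :=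
  {π | IsPermOn N π ∧ ¬ContainsPat N π [2, 3, 4, 1] ∧ ¬ContainsPat N π [2, 4, 3, 1] ∧
    ¬ContainsPat N π [3, 2, 4, 1]}

/-- `block(π)`: the number of `j ∈ {1,…,N}` with `{π(1),…,π(j)} = {1,…,j}`. -/
noncomputable def blockStat (N : ℕ) (π : ℕ → ℕ) : ℕ :=
  Set.ncard {j : ℕ | 1 ≤ j ∧ j ≤ N ∧ π '' Set.Icc 1 j = Set.Icc 1 j}

/-- `asc(π)`: the number of ascents of `π`. -/
noncomputable def ascStat (N : ℕ) (π : ℕ → ℕ) : ℕ :=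
  Set.ncard {i : ℕ | 1 ≤ i ∧ i + 1 ≤ N ∧ π i < π (i + 1)}

/-- `crit(π)`: the number of critical entries of `π`. -/
noncomputable def critStat (N : ℕ) (π : ℕ → ℕ) : ℕ :=
  Set.ncard {i : ℕ | 1 ≤ i ∧ i ≤ N ∧ ∀ j k : ℕ, 1 ≤ j → j < i → i < k → k ≤ N →
    π j < π i → π k < π i → π j < π k}

/-- An inversion sequence: `0 ≤ e_i < i` (1-indexed). -/
def IsInvSeq (e : List ℕ) : Prop := ∀ i : Fin e.length, e.get i < i.val + 1

/-- `e` contains the pattern `101`. -/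
def Contains101 (e : List ℕ) : Prop :=
  ∃ i j k : Fin e.length, i < j ∧ j < k ∧ e.get j < e.get i ∧ e.get i = e.get k

/-- `e` contains the pattern `102`. -/
def Contains102 (e : List ℕ) : Prop :=
  ∃ i j k : Fin e.length, i < j ∧ j < k ∧ e.get j < e.get i ∧ e.get i < e.get k

/-- `e` contains the pattern `021`. -/
def Contains021 (e : List ℕ) : Prop :=
  ∃ i j k : Fin e.length, i < j ∧ j < k ∧ e.get i < e.get k ∧ e.get k < e.get j

/-- Inversion sequences of length `n` avoiding `101` and `102`. -/
def ISet (n : ℕ) : Set (List ℕ) :=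
  {e | e.length = n ∧ IsInvSeq e ∧ ¬Contains101 e ∧ ¬Contains102 e}

/-- Inversion sequences of length `n` avoiding `101` and `021`. -/
def JSet (n : ℕ) : Set (List ℕ) :=
  {e | e.length = n ∧ IsInvSeq e ∧ ¬Contains101 e ∧ ¬Contains021 e}

/-- The largest entry of `e` (`0` for the empty sequence). -/
def maxVal (e : List ℕ) : ℕ := e.foldr max 0

/-- The largest (1-indexed) position of the maximal entry of `e`. -/
def maxid (e : List ℕ) : ℕ := e.length - e.reverse.idxOf (maxVal e)

/-- `e` with the entry at position `maxid e` removed. -/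
def ehat (e : List ℕ) : List ℕ := e.eraseIdx (maxid e - 1)

/-- `omi(e)`: the number of `i ∈ {1,…,n}` not occurring as an entry of `e`. -/
noncomputable def omi (e : List ℕ) : ℕ := Set.ncard {i : ℕ | 1 ≤ i ∧ i ≤ e.length ∧ i ∉ e}

/-- `cons(e)`: the number of `i ∈ {1,…,n-1}` such that both `i-1` and `i` occur in `e`. -/
noncomputable def consStat (e : List ℕ) : ℕ :=
  Set.ncard {i : ℕ | 1 ≤ i ∧ i + 1 ≤ e.length ∧ (i - 1) ∈ e ∧ i ∈ e}

/-- `first(e)`: the length of the initial run of zeros of `e`. -/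
def firstStat (e : List ℕ) : ℕ := (e.takeWhile (fun v => decide (v = 0))).length

/-- `single(e)`: the number of positive integers occurring exactly once in `e`. -/
noncomputable def singleStat (e : List ℕ) : ℕ := Set.ncard {v : ℕ | 1 ≤ v ∧ e.count v = 1}

/-- The binomial coefficient `C(p,q)`, interpreted as `0` unless `0 ≤ q ≤ p`. -/
def C (p q : ℤ) : ℤ := if 0 ≤ q ∧ q ≤ p then (p.toNat.choose q.toNat : ℤ) else 0


/-! ### F-side -/

noncomputable def stepsF (H : ℕ) : Finset (ℤ × ℤ) :=
  insert (0,1) ((Finset.range (H+1)).biUnion fun m =>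
    (Finset.Icc (1:ℤ) (m+1)).image fun a => (a, a - m))

lemma mem_stepsF {H : ℕ} {s : ℤ × ℤ} :
    s ∈ stepsF H ↔ s = (0,1) ∨ (1 ≤ s.1 ∧ s.2 ≤ 1 ∧ s.1 - s.2 ≤ H) := by
  simp only [stepsF, Finset.mem_insert, Finset.mem_biUnion, Finset.mem_image,
    Finset.mem_range, Finset.mem_Icc]
  constructor
  · rintro (rfl | ⟨m, hm, a, ⟨ha1, ha2⟩, rfl⟩)
    · exact Or.inl rfl
    · right
      refine ⟨ha1, ?_, ?_⟩ <;> simp <;> omega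
  · rintro (rfl | ⟨h1, h2, h3⟩)
    · exact Or.inl rfl
    · right
      refine ⟨(s.1 - s.2).toNat, by omega, s.1, ⟨h1, by push_cast; omega⟩, ?_⟩
      have : ((s.1 - s.2).toNat : ℤ) = s.1 - s.2 := by omega
      rw [this]
      ext <;> simp

noncomputable def FP : ℕ → Finset (List (ℤ × ℤ))
  | 0 => {[]}
  | n+1 => (FP n).biUnion fun Q => (stepsF (fheight Q).toNat).image fun s => Q ++ [s]

lemma fheight_concat (Q : List (ℤ×ℤ)) (s : ℤ×ℤ) :
    fheight (Q ++ [s]) = fheight Q + (s.2 - s.1) := by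
  simp [fheight]; ring

lemma take_concat {α : Type*} (Q : List α) (s : α) (i : ℕ) :
    (Q ++ [s]).take i = if i ≤ Q.length then Q.take i else Q ++ [s] := by
  split
  · exact List.take_append_of_le_length ‹_›
  · apply List.take_of_length_le
    simp; omega

lemma isFPath_concat {Q : List (ℤ×ℤ)} {s : ℤ×ℤ} :
    IsFPath (Q ++ [s]) ↔ IsFPath Q ∧ IsFStep s ∧ s.1 - s.2 ≤ fheight Q := by
  unfold IsFPath
  constructor
  · rintro ⟨hmem, hpre⟩
    refine ⟨⟨fun x hx => hmem x (by simp [hx]), fun i => ?_⟩, hmem s (by simp), ?_⟩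
    · rcases le_or_gt i Q.length with h | h
      · have := hpre i
        rwa [take_concat, if_pos h] at this
      · have := hpre Q.length
        rw [take_concat, if_pos le_rfl, List.take_length] at this
        rw [List.take_of_length_le (by omega)]
        exact this
    · have := hpre (Q.length + 1)
      rw [take_concat, if_neg (by omega)] at this
      simp only [List.map_append, List.sum_append, List.map_cons, List.map_nil,
        List.sum_cons, List.sum_nil] at this
      unfold fheight
      omega
  · rintro ⟨⟨hmem, hpre⟩, hs, hh⟩
    constructor
    · intro x hx
      rcases List.mem_append.mp hx with h | h
      · exact hmem x h
      · simp at h; subst h; exact hs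
    · intro i
      rw [take_concat]
      split
      · exact hpre i
      · simp only [List.map_append, List.sum_append, List.map_cons, List.map_nil,
          List.sum_cons, List.sum_nil]
        have := hpre Q.length
        rw [List.take_length] at this
        unfold fheight at hh
        omega

lemma fheight_nonneg {n : ℕ} {Q : List (ℤ×ℤ)} (h : Q ∈ FPaths n) : 0 ≤ fheight Q := by
  have := h.2.2 Q.length
  rw [List.take_length] at this
  unfold fheight
  omega

lemma fheight_le_length {Q : List (ℤ×ℤ)} (h : ∀ s ∈ Q, IsFStep s) :
    fheight Q ≤ Q.length := by
  induction Q with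
  | nil => simp [fheight]
  | cons s Q ih =>
    have hs := h s (by simp)
    have h2 : fheight Q ≤ Q.length := ih (fun x hx => h x (by simp [hx]))
    have : fheight (s :: Q) = (s.2 - s.1) + fheight Q := by simp [fheight]; ring
    rw [this]
    have : s.2 - s.1 ≤ 1 := by
      rcases hs with rfl | ⟨h1, h2⟩
      · simp
      · omega
    simp only [List.length_cons]
    push_cast
    omega

lemma FPaths_eq : ∀ n, FPaths n = ↑(FP n) := by
  intro n
  induction n with
  | zero =>
    ext Q
    simp only [FPaths, FP, Set.mem_setOf_eq, Finset.coe_singleton, Set.mem_singleton_iff,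
      List.length_eq_zero_iff]
    constructor
    · rintro ⟨h, _⟩; exact h
    · rintro rfl
      exact ⟨rfl, fun s hs => absurd hs List.not_mem_nil, fun i => by simp⟩
  | succ n ih =>
    ext Q
    simp only [FP, Finset.coe_biUnion, Set.mem_iUnion, Finset.mem_coe, Finset.mem_image]
    constructor
    · rintro ⟨hlen, hpath⟩
      rcases List.eq_nil_or_concat Q with rfl | ⟨Q', s, rfl⟩
      · simp at hlen
      · rw [List.concat_eq_append] at hlen hpath ⊢
        rw [isFPath_concat] at hpath
        obtain ⟨hQ', hs, hh⟩ := hpath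
        have hQm : Q' ∈ FPaths n := ⟨by simpa using hlen, hQ'⟩
        have hnn : 0 ≤ fheight Q' := fheight_nonneg hQm
        refine ⟨Q', by rw [← Finset.mem_coe, ← ih]; exact hQm, s, ?_, rfl⟩
        rw [mem_stepsF]
        rcases hs with rfl | ⟨h1, h2⟩
        · exact Or.inl rfl
        · right; refine ⟨h1, h2, by omega⟩
    · rintro ⟨Q', hQ', s, hs, rfl⟩
      have hQm : Q' ∈ FPaths n := by rw [ih]; exact hQ'
      have hnn : 0 ≤ fheight Q' := fheight_nonneg hQm
      rw [mem_stepsF] at hs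
      refine ⟨by simp [hQm.1], ?_⟩
      rw [isFPath_concat]
      refine ⟨hQm.2, ?_, ?_⟩
      · rcases hs with rfl | ⟨h1, h2, _⟩
        · exact Or.inl rfl
        · exact Or.inr ⟨h1, h2⟩
      · rcases hs with rfl | ⟨h1, h2, h3⟩
        · simp; omega
        · omega
/-! ### S-side -/

def swd (P : List SStep) : ℕ := (P.map swidth).sum
def shgt (P : List SStep) : ℤ := (P.map shc).sum

def DSet (w h : ℕ) : Set (List SStep) :=
  {P | ¬ [SStep.d, SStep.d, SStep.d] <:+: P ∧ (∀ i, 0 ≤ shgt (P.take i)) ∧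
    swd P = w ∧ shgt P = h}

lemma shgt_concat (P : List SStep) (x : SStep) : shgt (P ++ [x]) = shgt P + shc x := by
  simp [shgt]

lemma swd_concat (P : List SStep) (x : SStep) : swd (P ++ [x]) = swd P + swidth x := by
  simp [swd]

lemma shgt_take_len (P : List SStep) : shgt (P.take P.length) = shgt P := by
  rw [List.take_length]

/-- helper A -/
lemma ddd_concat {x : SStep} (hx : x ≠ SStep.d) (P : List SStep) :
    [SStep.d, SStep.d, SStep.d] <:+: (P ++ [x]) ↔ [SStep.d, SStep.d, SStep.d] <:+: P := by
  constructor
  · rintro ⟨s, t, hst⟩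
    rcases List.eq_nil_or_concat t with rfl | ⟨t', y, rfl⟩
    · exfalso
      apply hx
      have h1 : (s ++ [SStep.d, SStep.d]) ++ [SStep.d] = P ++ [x] := by
        simpa [List.append_assoc] using hst
      have h2 := List.append_inj' h1 rfl
      exact (List.cons.injEq _ _ _ _ ▸ h2.2).1.symm
    · rw [List.concat_eq_append] at hst
      have h1 : (s ++ [SStep.d, SStep.d, SStep.d] ++ t') ++ [y] = P ++ [x] := by
        simpa [List.append_assoc] using hst
      exact ⟨s, t', (List.append_inj' h1 rfl).1⟩
  · rintro ⟨s, t, rfl⟩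
    exact ⟨s, t ++ [x], by simp⟩

/-- helper B -/
lemma ddd_concat_d {x : SStep} (hx : x ≠ SStep.d) (P : List SStep) :
    [SStep.d, SStep.d, SStep.d] <:+: (P ++ [x] ++ [SStep.d]) ↔
      [SStep.d, SStep.d, SStep.d] <:+: P := by
  constructor
  · rintro ⟨s, t, hst⟩
    rcases List.eq_nil_or_concat t with rfl | ⟨t', y, rfl⟩
    · exfalso
      apply hx
      have h1 : (s ++ [SStep.d]) ++ [SStep.d, SStep.d] = P ++ [x, SStep.d] := by
        simpa [List.append_assoc] using hst
      have h2 := List.append_inj' h1 rfl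
      exact (List.cons.injEq _ _ _ _ ▸ h2.2).1.symm
    · rw [List.concat_eq_append] at hst
      have h1 : (s ++ [SStep.d, SStep.d, SStep.d] ++ t') ++ [y] = (P ++ [x]) ++ [SStep.d] := by
        simpa [List.append_assoc] using hst
      have h2 : [SStep.d, SStep.d, SStep.d] <:+: (P ++ [x]) :=
        ⟨s, t', (List.append_inj' h1 rfl).1⟩
      exact (ddd_concat hx P).mp h2
  · rintro ⟨s, t, rfl⟩
    exact ⟨s, t ++ [x] ++ [SStep.d], by simp⟩

/-- helper C -/
lemma ddd_concat_dd {x : SStep} (hx : x ≠ SStep.d) (P : List SStep) :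
    [SStep.d, SStep.d, SStep.d] <:+: (P ++ [x] ++ [SStep.d] ++ [SStep.d]) ↔
      [SStep.d, SStep.d, SStep.d] <:+: P := by
  constructor
  · rintro ⟨s, t, hst⟩
    rcases List.eq_nil_or_concat t with rfl | ⟨t', y, rfl⟩
    · exfalso
      apply hx
      have h1 : s ++ [SStep.d, SStep.d, SStep.d] = P ++ [x, SStep.d, SStep.d] := by
        simpa [List.append_assoc] using hst
      have h2 := List.append_inj' h1 rfl
      exact (List.cons.injEq _ _ _ _ ▸ h2.2).1.symm
    · rw [List.concat_eq_append] at hst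
      have h1 : (s ++ [SStep.d, SStep.d, SStep.d] ++ t') ++ [y] =
          (P ++ [x] ++ [SStep.d]) ++ [SStep.d] := by
        simpa [List.append_assoc] using hst
      have h2 : [SStep.d, SStep.d, SStep.d] <:+: (P ++ [x] ++ [SStep.d]) :=
        ⟨s, t', (List.append_inj' h1 rfl).1⟩
      exact (ddd_concat_d hx P).mp h2
  · rintro ⟨s, t, rfl⟩
    exact ⟨s, t ++ [x] ++ [SStep.d] ++ [SStep.d], by simp⟩

lemma nonneg_take_concat {P : List SStep} {x : SStep} :
    (∀ i, 0 ≤ shgt ((P ++ [x]).take i)) ↔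
      (∀ i, 0 ≤ shgt (P.take i)) ∧ 0 ≤ shgt P + shc x := by
  constructor
  · intro hp
    constructor
    · intro i
      rcases le_or_gt i P.length with h | h
      · have := hp i
        rwa [take_concat, if_pos h] at this
      · have := hp P.length
        rw [take_concat, if_pos le_rfl, List.take_length] at this
        rw [List.take_of_length_le (by omega)]
        exact this
    · have := hp (P.length + 1)
      rw [take_concat, if_neg (by omega)] at this
      rwa [shgt_concat] at this
  · rintro ⟨hp, he⟩
    intro i
    rw [take_concat]
    split
    · exact hp i
    · rwa [shgt_concat]
lemma shgt_nonneg {w h : ℕ} {P : List SStep} (hP : P ∈ DSet w h) (i : ℕ) :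
    0 ≤ shgt (P.take i) := hP.2.1 i

lemma D_concat_u {P : List SStep} {w h : ℕ} :
    P ++ [SStep.u] ∈ DSet (w+1) h ↔ 1 ≤ h ∧ P ∈ DSet w (h-1) := by
  unfold DSet
  simp only [Set.mem_setOf_eq]
  rw [ddd_concat (by simp) P, nonneg_take_concat, swd_concat, shgt_concat]
  simp only [swidth, shc]
  constructor
  · rintro ⟨h1, ⟨h2, h3⟩, h4, h5⟩
    have hnn : 0 ≤ shgt P := by have := h2 P.length; rwa [List.take_length] at this
    have hh : 1 ≤ h := by omega
    exact ⟨hh, h1, h2, by omega, by push_cast; omega⟩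
  · rintro ⟨hh, h1, h2, h3, h4⟩
    refine ⟨h1, ⟨h2, by omega⟩, by omega, by push_cast at h4 ⊢; omega⟩

lemma D_concat_h {P : List SStep} {w h : ℕ} :
    P ++ [SStep.h] ∈ DSet (w+2) h ↔ P ∈ DSet w h := by
  unfold DSet
  simp only [Set.mem_setOf_eq]
  rw [ddd_concat (by simp) P, nonneg_take_concat, swd_concat, shgt_concat]
  simp only [swidth, shc]
  constructor
  · rintro ⟨h1, ⟨h2, h3⟩, h4, h5⟩
    exact ⟨h1, h2, by omega, by omega⟩
  · rintro ⟨h1, h2, h3, h4⟩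
    have hnn : 0 ≤ shgt P := by have := h2 P.length; rwa [List.take_length] at this
    exact ⟨h1, ⟨h2, by omega⟩, by omega, by omega⟩

lemma D_concat_ud {P : List SStep} {w h : ℕ} :
    P ++ [SStep.u, SStep.d] ∈ DSet (w+2) h ↔ P ∈ DSet w h := by
  have e : P ++ [SStep.u, SStep.d] = P ++ [SStep.u] ++ [SStep.d] := by simp
  unfold DSet
  simp only [Set.mem_setOf_eq]
  rw [e, ddd_concat_d (by simp) P, nonneg_take_concat, nonneg_take_concat]
  simp only [swd_concat, shgt_concat]
  simp only [swidth, shc]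
  constructor
  · rintro ⟨h1, ⟨⟨h2a, h2b⟩, h3⟩, h4, h5⟩
    exact ⟨h1, h2a, by omega, by omega⟩
  · rintro ⟨h1, h2, h3, h4⟩
    have hnn : 0 ≤ shgt P := by have := h2 P.length; rwa [List.take_length] at this
    exact ⟨h1, ⟨⟨h2, by omega⟩, by omega⟩, by omega, by omega⟩

lemma D_concat_hd {P : List SStep} {w h : ℕ} :
    P ++ [SStep.h, SStep.d] ∈ DSet (w+3) h ↔ P ∈ DSet w (h+1) := by
  have e : P ++ [SStep.h, SStep.d] = P ++ [SStep.h] ++ [SStep.d] := by simp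
  unfold DSet
  simp only [Set.mem_setOf_eq]
  rw [e, ddd_concat_d (by simp) P, nonneg_take_concat, nonneg_take_concat]
  simp only [swd_concat, shgt_concat]
  simp only [swidth, shc]
  constructor
  · rintro ⟨h1, ⟨⟨h2a, h2b⟩, h3⟩, h4, h5⟩
    exact ⟨h1, h2a, by omega, by push_cast at h5 ⊢; omega⟩
  · rintro ⟨h1, h2, h3, h4⟩
    have hnn : 0 ≤ shgt P := by have := h2 P.length; rwa [List.take_length] at this
    exact ⟨h1, ⟨⟨h2, by omega⟩, by push_cast at h4 ⊢; omega⟩, by omega,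
      by push_cast at h4 ⊢; omega⟩

lemma D_concat_udd {P : List SStep} {w h : ℕ} :
    P ++ [SStep.u, SStep.d, SStep.d] ∈ DSet (w+3) h ↔ P ∈ DSet w (h+1) := by
  have e : P ++ [SStep.u, SStep.d, SStep.d] = P ++ [SStep.u] ++ [SStep.d] ++ [SStep.d] := by
    simp
  unfold DSet
  simp only [Set.mem_setOf_eq]
  rw [e, ddd_concat_dd (by simp) P, nonneg_take_concat, nonneg_take_concat,
    nonneg_take_concat]
  simp only [swd_concat, shgt_concat]
  simp only [swidth, shc]
  constructor
  · rintro ⟨h1, ⟨⟨⟨h2a, _⟩, _⟩, _⟩, h4, h5⟩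
    exact ⟨h1, h2a, by omega, by push_cast at h5 ⊢; omega⟩
  · rintro ⟨h1, h2, h3, h4⟩
    have hnn : 0 ≤ shgt P := by have := h2 P.length; rwa [List.take_length] at this
    push_cast at h4
    exact ⟨h1, ⟨⟨⟨h2, by omega⟩, by omega⟩, by omega⟩, by omega, by push_cast; omega⟩

lemma D_concat_hdd {P : List SStep} {w h : ℕ} :
    P ++ [SStep.h, SStep.d, SStep.d] ∈ DSet (w+4) h ↔ P ∈ DSet w (h+2) := by
  have e : P ++ [SStep.h, SStep.d, SStep.d] = P ++ [SStep.h] ++ [SStep.d] ++ [SStep.d] := by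
    simp
  unfold DSet
  simp only [Set.mem_setOf_eq]
  rw [e, ddd_concat_dd (by simp) P, nonneg_take_concat, nonneg_take_concat,
    nonneg_take_concat]
  simp only [swd_concat, shgt_concat]
  simp only [swidth, shc]
  constructor
  · rintro ⟨h1, ⟨⟨⟨h2a, _⟩, _⟩, _⟩, h4, h5⟩
    exact ⟨h1, h2a, by omega, by push_cast at h5 ⊢; omega⟩
  · rintro ⟨h1, h2, h3, h4⟩
    have hnn : 0 ≤ shgt P := by have := h2 P.length; rwa [List.take_length] at this
    push_cast at h4
    exact ⟨h1, ⟨⟨⟨h2, by omega⟩, by omega⟩, by omega⟩, by omega, by push_cast; omega⟩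
def SPF : ℕ → ℕ → Finset (List SStep)
  | 0, h => if h = 0 then {[]} else ∅
  | (w+1), h =>
    (if 1 ≤ h then (SPF w (h-1)).image (· ++ [SStep.u]) else ∅) ∪
    ((if 1 ≤ w then (SPF (w-1) h).image (· ++ [SStep.h]) ∪
        (SPF (w-1) h).image (· ++ [SStep.u, SStep.d]) else ∅) ∪
    ((if 2 ≤ w then (SPF (w-2) (h+1)).image (· ++ [SStep.h, SStep.d]) ∪
        (SPF (w-2) (h+1)).image (· ++ [SStep.u, SStep.d, SStep.d]) else ∅) ∪
    (if 3 ≤ w then (SPF (w-3) (h+2)).image (· ++ [SStep.h, SStep.d, SStep.d]) else ∅)))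
  termination_by w h => w
  decreasing_by all_goals omega

lemma D_nil {h : ℕ} : ([] : List SStep) ∈ DSet 0 h ↔ h = 0 := by
  unfold DSet
  constructor
  · rintro ⟨-, -, -, h4⟩
    simp [shgt] at h4
    omega
  · rintro rfl
    exact ⟨by rintro ⟨s, t, hst⟩; simp at hst, fun i => by simp [shgt], by simp [swd],
      by simp [shgt]⟩

lemma swd_eq_zero {P : List SStep} (h : swd P = 0) : P = [] := by
  cases P with
  | nil => rfl
  | cons x P => exfalso; cases x <;> simp [swd, swidth] at h

lemma D_decomp {w h : ℕ} {P : List SStep} (hP : P ∈ DSet w h) (hne : P ≠ []) :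
    (∃ P', P = P' ++ [SStep.u]) ∨ (∃ P', P = P' ++ [SStep.h]) ∨
    (∃ P', P = P' ++ [SStep.u, SStep.d]) ∨ (∃ P', P = P' ++ [SStep.h, SStep.d]) ∨
    (∃ P', P = P' ++ [SStep.u, SStep.d, SStep.d]) ∨
    (∃ P', P = P' ++ [SStep.h, SStep.d, SStep.d]) := by
  rcases List.eq_nil_or_concat P with rfl | ⟨P₁, x, rfl⟩
  · exact absurd rfl hne
  rw [List.concat_eq_append] at hP ⊢
  cases x with
  | u => exact Or.inl ⟨P₁, rfl⟩
  | h => exact Or.inr (Or.inl ⟨P₁, rfl⟩)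
  | d =>
    rcases List.eq_nil_or_concat P₁ with rfl | ⟨P₂, y, rfl⟩
    · exfalso
      have := hP.2.1 1
      simp [shgt, shc] at this
    rw [List.concat_eq_append] at hP ⊢
    cases y with
    | u => exact Or.inr (Or.inr (Or.inl ⟨P₂, by simp⟩))
    | h => exact Or.inr (Or.inr (Or.inr (Or.inl ⟨P₂, by simp⟩)))
    | d =>
      rcases List.eq_nil_or_concat P₂ with rfl | ⟨P₃, z, rfl⟩
      · exfalso
        have := hP.2.1 1
        simp [shgt, shc, List.take] at this
      rw [List.concat_eq_append] at hP ⊢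
      cases z with
      | u => exact Or.inr (Or.inr (Or.inr (Or.inr (Or.inl ⟨P₃, by simp⟩))))
      | h => exact Or.inr (Or.inr (Or.inr (Or.inr (Or.inr ⟨P₃, by simp⟩))))
      | d =>
        exfalso
        exact hP.1 ⟨P₃, [], by simp⟩

lemma mem_SPF : ∀ (w h : ℕ) (P : List SStep), P ∈ SPF w h ↔ P ∈ DSet w h := by
  intro w
  induction w using Nat.strong_induction_on with
  | _ w IH =>
    intro h P
    match w with
    | 0 =>
      rw [SPF]
      constructor
      · intro hm
        split at hm
        · simp at hm
          subst hm
          exact D_nil.mpr ‹_›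
        · simp at hm
      · intro hm
        have h0 : swd P = 0 := hm.2.2.1
        have := swd_eq_zero h0
        subst this
        have := D_nil.mp hm
        simp [this]
    | w+1 =>
      rw [SPF]
      simp only [Finset.mem_union]
      constructor
      · rintro (hm | hm | hm | hm)
        · split at hm
          case isTrue hh =>
            simp only [Finset.mem_image] at hm
            obtain ⟨P', hP', rfl⟩ := hm
            rw [IH w (by omega)] at hP'
            exact D_concat_u.mpr ⟨hh, hP'⟩
          case isFalse => simp at hm
        · split at hm
          case isTrue hw =>
            simp only [Finset.mem_union, Finset.mem_image] at hm
            rcases hm with ⟨P', hP', rfl⟩ | ⟨P', hP', rfl⟩ <;>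
              rw [IH (w-1) (by omega)] at hP'
            · have : w + 1 = (w-1) + 2 := by omega
              rw [this]
              exact D_concat_h.mpr hP'
            · have : w + 1 = (w-1) + 2 := by omega
              rw [this]
              exact D_concat_ud.mpr hP'
          case isFalse => simp at hm
        · split at hm
          case isTrue hw =>
            simp only [Finset.mem_union, Finset.mem_image] at hm
            rcases hm with ⟨P', hP', rfl⟩ | ⟨P', hP', rfl⟩ <;>
              rw [IH (w-2) (by omega)] at hP'
            · have : w + 1 = (w-2) + 3 := by omega
              rw [this]
              exact D_concat_hd.mpr hP'
            · have : w + 1 = (w-2) + 3 := by omega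
              rw [this]
              exact D_concat_udd.mpr hP'
          case isFalse => simp at hm
        · split at hm
          case isTrue hw =>
            simp only [Finset.mem_image] at hm
            obtain ⟨P', hP', rfl⟩ := hm
            rw [IH (w-3) (by omega)] at hP'
            have : w + 1 = (w-3) + 4 := by omega
            rw [this]
            exact D_concat_hdd.mpr hP'
          case isFalse => simp at hm
      · intro hm
        have hne : P ≠ [] := by
          intro hnil
          subst hnil
          have : swd ([] : List SStep) = w + 1 := hm.2.2.1
          simp [swd] at this
        rcases D_decomp hm hne with ⟨P', rfl⟩ | ⟨P', rfl⟩ | ⟨P', rfl⟩ | ⟨P', rfl⟩ |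
          ⟨P', rfl⟩ | ⟨P', rfl⟩
        · obtain ⟨hh, hP'⟩ := D_concat_u.mp hm
          refine Or.inl ?_
          rw [if_pos hh]
          exact Finset.mem_image_of_mem _ ((IH w (by omega) _ _).mpr hP')
        · have hw : 1 ≤ w := by
            have := hm.2.2.1
            rw [swd_concat] at this
            simp [swidth] at this
            omega
          have e : w + 1 = (w-1) + 2 := by omega
          rw [e] at hm
          have hP' := D_concat_h.mp hm
          refine Or.inr (Or.inl ?_)
          rw [if_pos hw]
          exact Finset.mem_union_left _
            (Finset.mem_image_of_mem _ ((IH (w-1) (by omega) _ _).mpr hP'))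
        · have hw : 1 ≤ w := by
            have := hm.2.2.1
            have e2 : P' ++ [SStep.u, SStep.d] = P' ++ [SStep.u] ++ [SStep.d] := by simp
            rw [e2, swd_concat, swd_concat] at this
            simp [swidth] at this
            omega
          have e : w + 1 = (w-1) + 2 := by omega
          rw [e] at hm
          have hP' := D_concat_ud.mp hm
          refine Or.inr (Or.inl ?_)
          rw [if_pos hw]
          exact Finset.mem_union_right _
            (Finset.mem_image_of_mem _ ((IH (w-1) (by omega) _ _).mpr hP'))
        · have hw : 2 ≤ w := by
            have := hm.2.2.1
            have e2 : P' ++ [SStep.h, SStep.d] = P' ++ [SStep.h] ++ [SStep.d] := by simp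
            rw [e2, swd_concat, swd_concat] at this
            simp [swidth] at this
            omega
          have e : w + 1 = (w-2) + 3 := by omega
          rw [e] at hm
          have hP' := D_concat_hd.mp hm
          refine Or.inr (Or.inr (Or.inl ?_))
          rw [if_pos hw]
          exact Finset.mem_union_left _
            (Finset.mem_image_of_mem _ ((IH (w-2) (by omega) _ _).mpr hP'))
        · have hw : 2 ≤ w := by
            have := hm.2.2.1
            have e2 : P' ++ [SStep.u, SStep.d, SStep.d] =
                P' ++ [SStep.u] ++ [SStep.d] ++ [SStep.d] := by simp
            rw [e2, swd_concat, swd_concat, swd_concat] at this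
            simp [swidth] at this
            omega
          have e : w + 1 = (w-2) + 3 := by omega
          rw [e] at hm
          have hP' := D_concat_udd.mp hm
          refine Or.inr (Or.inr (Or.inl ?_))
          rw [if_pos hw]
          exact Finset.mem_union_right _
            (Finset.mem_image_of_mem _ ((IH (w-2) (by omega) _ _).mpr hP'))
        · have hw : 3 ≤ w := by
            have := hm.2.2.1
            have e2 : P' ++ [SStep.h, SStep.d, SStep.d] =
                P' ++ [SStep.h] ++ [SStep.d] ++ [SStep.d] := by simp
            rw [e2, swd_concat, swd_concat, swd_concat] at this
            simp [swidth] at this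
            omega
          have e : w + 1 = (w-3) + 4 := by omega
          rw [e] at hm
          have hP' := D_concat_hdd.mp hm
          refine Or.inr (Or.inr (Or.inr ?_))
          rw [if_pos hw]
          exact Finset.mem_image_of_mem _ ((IH (w-3) (by omega) _ _).mpr hP')
lemma disj_image_concat (L₁ L₂ : List SStep) (s t : Finset (List SStep))
    (h1 : ¬ L₁ <:+ L₂) (h2 : ¬ L₂ <:+ L₁) :
    Disjoint (s.image (· ++ L₁)) (t.image (· ++ L₂)) := by
  rw [Finset.disjoint_left]
  rintro x hx hy
  simp only [Finset.mem_image] at hx hy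
  obtain ⟨a, -, rfl⟩ := hx
  obtain ⟨b, -, hb⟩ := hy
  have s1 : L₁ <:+ a ++ L₁ := List.suffix_append a L₁
  have s2 : L₂ <:+ a ++ L₁ := hb ▸ List.suffix_append b L₂
  rcases List.suffix_or_suffix_of_suffix s1 s2 with h | h
  · exact h1 h
  · exact h2 h

lemma inj_concat (L : List SStep) : Function.Injective (fun P : List SStep => P ++ L) :=
  fun a b hab => (List.append_left_inj L).mp hab

lemma card_union_six (s1 s2 s3 s4 s5 s6 : Finset (List SStep)) :
    ((s1.image (· ++ [SStep.u])) ∪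
      ((s2.image (· ++ [SStep.h]) ∪ s3.image (· ++ [SStep.u, SStep.d])) ∪
      ((s4.image (· ++ [SStep.h, SStep.d]) ∪
          s5.image (· ++ [SStep.u, SStep.d, SStep.d])) ∪
        s6.image (· ++ [SStep.h, SStep.d, SStep.d])))).card =
      s1.card + ((s2.card + s3.card) + ((s4.card + s5.card) + s6.card)) := by
  rw [Finset.card_union_of_disjoint (by
      try simp only [Finset.disjoint_union_left, Finset.disjoint_union_right]
      repeat' apply And.intro
      all_goals exact disj_image_concat _ _ _ _ (by decide) (by decide)),
    Finset.card_union_of_disjoint (by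
      try simp only [Finset.disjoint_union_left, Finset.disjoint_union_right]
      repeat' apply And.intro
      all_goals exact disj_image_concat _ _ _ _ (by decide) (by decide)),
    Finset.card_union_of_disjoint (by
      try simp only [Finset.disjoint_union_left, Finset.disjoint_union_right]
      repeat' apply And.intro
      all_goals exact disj_image_concat _ _ _ _ (by decide) (by decide)),
    Finset.card_union_of_disjoint (by
      try simp only [Finset.disjoint_union_left, Finset.disjoint_union_right]
      repeat' apply And.intro
      all_goals exact disj_image_concat _ _ _ _ (by decide) (by decide)),
    Finset.card_union_of_disjoint (by
      try simp only [Finset.disjoint_union_left, Finset.disjoint_union_right]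
      repeat' apply And.intro
      all_goals exact disj_image_concat _ _ _ _ (by decide) (by decide))]
  simp [Finset.card_image_of_injective, inj_concat]

lemma SPF_card (w h : ℕ) :
    (SPF (w+1) h).card =
      (if 1 ≤ h then (SPF w (h-1)).card else 0) +
      (((if 1 ≤ w then (SPF (w-1) h).card else 0) + (if 1 ≤ w then (SPF (w-1) h).card else 0)) +
      (((if 2 ≤ w then (SPF (w-2) (h+1)).card else 0) +
        (if 2 ≤ w then (SPF (w-2) (h+1)).card else 0)) +
      (if 3 ≤ w then (SPF (w-3) (h+2)).card else 0))) := by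
  have e1 : (if 1 ≤ h then (SPF w (h-1)).image (· ++ [SStep.u]) else ∅) =
      (if 1 ≤ h then SPF w (h-1) else ∅).image (· ++ [SStep.u]) := by
    split <;> simp
  have e2 : (if 1 ≤ w then (SPF (w-1) h).image (· ++ [SStep.h]) ∪
        (SPF (w-1) h).image (· ++ [SStep.u, SStep.d]) else ∅) =
      ((if 1 ≤ w then SPF (w-1) h else ∅).image (· ++ [SStep.h]) ∪
        (if 1 ≤ w then SPF (w-1) h else ∅).image (· ++ [SStep.u, SStep.d])) := by
    split <;> simp
  have e3 : (if 2 ≤ w then (SPF (w-2) (h+1)).image (· ++ [SStep.h, SStep.d]) ∪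
        (SPF (w-2) (h+1)).image (· ++ [SStep.u, SStep.d, SStep.d]) else ∅) =
      ((if 2 ≤ w then SPF (w-2) (h+1) else ∅).image (· ++ [SStep.h, SStep.d]) ∪
        (if 2 ≤ w then SPF (w-2) (h+1) else ∅).image (· ++ [SStep.u, SStep.d, SStep.d])) := by
    split <;> simp
  have e4 : (if 3 ≤ w then (SPF (w-3) (h+2)).image (· ++ [SStep.h, SStep.d, SStep.d]) else ∅) =
      (if 3 ≤ w then SPF (w-3) (h+2) else ∅).image (· ++ [SStep.h, SStep.d, SStep.d]) := by
    split <;> simp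
  conv_lhs => rw [SPF]
  rw [e1, e2, e3, e4, card_union_six]
  congr 1 <;> [skip; congr 1] <;> [split <;> simp; skip; skip] <;> congr 1 <;>
    first
      | (split <;> simp)
      | (congr 1 <;> split <;> simp)
/-! ### Arithmetic core -/

lemma sum_range_choose_eq (M k : ℕ) :
    ∑ t ∈ Finset.range (M+1), t.choose k = (M+1).choose (k+1) := by
  rw [← Nat.sum_Icc_choose]
  refine (Finset.sum_subset ?_ ?_).symm
  · intro x hx
    simp only [Finset.mem_Icc] at hx
    simp only [Finset.mem_range]
    omega
  · intro x hx hnx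
    simp only [Finset.mem_range] at hx
    simp only [Finset.mem_Icc] at hnx
    exact Nat.choose_eq_zero_of_lt (by omega)

lemma sum_weighted_choose (H k : ℕ) :
    ∑ t ∈ Finset.range (H+1), (H - t + 1) * t.choose k = (H+2).choose (k+2) := by
  induction H with
  | zero =>
    cases k with
    | zero => simp
    | succ k' =>
      have h0 : (2:ℕ).choose (k'+1+2) = 0 := Nat.choose_eq_zero_of_lt (by omega)
      have h1 : (0:ℕ).choose (k'+1) = 0 := Nat.choose_eq_zero_of_lt (by omega)
      simp [h0, h1]
  | succ H IH =>
    rw [Finset.sum_range_succ]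
    have e1 : ∑ t ∈ Finset.range (H+1), (H + 1 - t + 1) * t.choose k =
        (∑ t ∈ Finset.range (H+1), (H - t + 1) * t.choose k) +
          ∑ t ∈ Finset.range (H+1), t.choose k := by
      rw [← Finset.sum_add_distrib]
      apply Finset.sum_congr rfl
      intro t ht
      simp only [Finset.mem_range] at ht
      have : H + 1 - t + 1 = (H - t + 1) + 1 := by omega
      rw [this]
      ring
    rw [e1, IH, sum_range_choose_eq]
    have h1 : H + 1 - (H + 1) + 1 = 1 := by omega
    rw [h1, one_mul]
    have e2 : (H+1+2).choose (k+2) = (H+2).choose (k+1) + (H+2).choose (k+2) :=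
      Nat.choose_succ_succ' (H+2) (k+1)
    have e3 : (H+2).choose (k+1) = (H+1).choose k + (H+1).choose (k+1) :=
      Nat.choose_succ_succ' (H+1) k
    omega

lemma sum_stepsF_choose (H k : ℕ) :
    ∑ s ∈ stepsF H, ((H : ℤ) + (s.2 - s.1)).toNat.choose k =
      (H+1).choose k + (H+2).choose (k+2) := by
  unfold stepsF
  rw [Finset.sum_insert]
  · have e0 : (((H:ℤ) + ((0,1).2 - (0,1).1)).toNat) = H + 1 := by simp
    rw [e0]
    congr 1
    rw [Finset.sum_biUnion]
    · have e1 : ∀ m ∈ Finset.range (H+1),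
          (∑ s ∈ (Finset.Icc (1:ℤ) (m+1)).image (fun a => (a, a - (m:ℤ))),
            ((H : ℤ) + (s.2 - s.1)).toNat.choose k) = (m+1) * (H - m).choose k := by
        intro m hm
        simp only [Finset.mem_range] at hm
        rw [Finset.sum_image (by intro a _ b _ hab; exact (Prod.mk.injEq _ _ _ _ ▸ hab).1)]
        have : ∀ a ∈ Finset.Icc (1:ℤ) (m+1),
            ((H:ℤ) + ((a - m) - a)).toNat.choose k = (H - m).choose k := by
          intro a _
          congr 1
          omega
        rw [Finset.sum_congr rfl this, Finset.sum_const, Int.card_Icc]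
        have : (((m:ℤ) + 1 + 1 - 1).toNat) = m + 1 := by omega
        rw [this, smul_eq_mul]
      rw [Finset.sum_congr rfl e1]
      have := Finset.sum_range_reflect (fun t => (t+1) * (H - t).choose k) (H+1)
      rw [← this]
      have e2 : ∀ j ∈ Finset.range (H+1),
          (H + 1 - 1 - j + 1) * (H - (H + 1 - 1 - j)).choose k = (H - j + 1) * j.choose k := by
        intro j hj
        simp only [Finset.mem_range] at hj
        congr 2 <;> omega
      rw [Finset.sum_congr rfl e2, sum_weighted_choose]
    · intro a ha b hb hab
      simp only [Finset.mem_coe, Finset.mem_range] at ha hb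
      rw [Function.onFun, Finset.disjoint_left]
      rintro x hx hy
      simp only [Finset.mem_image, Finset.mem_Icc] at hx hy
      obtain ⟨p, hp, rfl⟩ := hx
      obtain ⟨q, hq, hqe⟩ := hy
      have h1 := (Prod.mk.injEq _ _ _ _ ▸ hqe).1
      have h2 := (Prod.mk.injEq _ _ _ _ ▸ hqe).2
      apply hab
      omega
  · intro hmem
    simp only [Finset.mem_biUnion, Finset.mem_image, Finset.mem_Icc] at hmem
    obtain ⟨m, -, a, ⟨ha, -⟩, he⟩ := hmem
    have := (Prod.mk.injEq _ _ _ _ ▸ he).1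
    omega

noncomputable def Lsum (m k : ℕ) : ℕ := ∑ Q ∈ FP m, (fheight Q).toNat.choose k

lemma mem_FP_height {m : ℕ} {Q : List (ℤ×ℤ)} (hQ : Q ∈ FP m) :
    0 ≤ fheight Q ∧ fheight Q ≤ m ∧ Q.length = m := by
  have : Q ∈ FPaths m := by rw [FPaths_eq]; exact hQ
  refine ⟨fheight_nonneg this, ?_, this.1⟩
  have h1 := fheight_le_length this.2.1
  have h2 : Q.length = m := this.1
  omega

lemma Lsum_zero {m k : ℕ} (h : m < k) : Lsum m k = 0 := by
  unfold Lsum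
  apply Finset.sum_eq_zero
  intro Q hQ
  obtain ⟨h1, h2, -⟩ := mem_FP_height hQ
  exact Nat.choose_eq_zero_of_lt (by omega)

lemma Lsum_rec (m k : ℕ) :
    Lsum (m+1) k = (if 1 ≤ k then Lsum m (k-1) else 0) + 2 * Lsum m k +
      2 * Lsum m (k+1) + Lsum m (k+2) := by
  have hdisj : (↑(FP m) : Set (List (ℤ×ℤ))).PairwiseDisjoint
      (fun Q => (stepsF (fheight Q).toNat).image fun s => Q ++ [s]) := by
    intro a ha b hb hab
    rw [Function.onFun, Finset.disjoint_left]
    rintro x hx hy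
    simp only [Finset.mem_image] at hx hy
    obtain ⟨s, -, rfl⟩ := hx
    obtain ⟨t, -, hy⟩ := hy
    exact hab ((List.append_inj' hy rfl).1.symm)
  have step1 : Lsum (m+1) k =
      ∑ Q ∈ FP m, ∑ s ∈ stepsF (fheight Q).toNat,
        (fheight (Q ++ [s])).toNat.choose k := by
    unfold Lsum
    rw [show FP (m+1) = (FP m).biUnion fun Q =>
      (stepsF (fheight Q).toNat).image fun s => Q ++ [s] from rfl]
    rw [Finset.sum_biUnion hdisj]
    apply Finset.sum_congr rfl
    intro Q hQ
    rw [Finset.sum_image]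
    intro a _ b _ hab
    have := (List.append_inj hab rfl).2
    simpa using this
  have step2 : ∀ Q ∈ FP m, ∑ s ∈ stepsF (fheight Q).toNat,
      (fheight (Q ++ [s])).toNat.choose k =
      ((fheight Q).toNat + 1).choose k + ((fheight Q).toNat + 2).choose (k+2) := by
    intro Q hQ
    obtain ⟨h1, -, -⟩ := mem_FP_height hQ
    rw [← sum_stepsF_choose (fheight Q).toNat k]
    apply Finset.sum_congr rfl
    intro s _
    congr 2
    rw [fheight_concat]
    omega
  rw [step1, Finset.sum_congr rfl step2]
  have key : ∀ H : ℕ, (H + 1).choose k + (H + 2).choose (k+2) =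
      (if 1 ≤ k then H.choose (k-1) else 0) + 2 * H.choose k +
        2 * H.choose (k+1) + H.choose (k+2) := by
    intro H
    have a1 : (H+2).choose (k+2) = (H+1).choose (k+1) + (H+1).choose (k+2) :=
      Nat.choose_succ_succ' (H+1) (k+1)
    have a2 : (H+1).choose (k+1) = H.choose k + H.choose (k+1) :=
      Nat.choose_succ_succ' H k
    have a3 : (H+1).choose (k+2) = H.choose (k+1) + H.choose (k+2) :=
      Nat.choose_succ_succ' H (k+1)
    cases k with
    | zero =>
      rw [if_neg (by omega : ¬ 1 ≤ 0)]
      have b1 : (H+1).choose 0 = 1 := Nat.choose_zero_right _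
      have b2 : H.choose 0 = 1 := Nat.choose_zero_right _
      omega
    | succ k' =>
      rw [if_pos (by omega : 1 ≤ k'+1), Nat.add_sub_cancel]
      have b1 : (H+1).choose (k'+1) = H.choose k' + H.choose (k'+1) :=
        Nat.choose_succ_succ' H k'
      omega
  rw [Finset.sum_congr rfl (fun Q _ => key (fheight Q).toNat)]
  by_cases hk : 1 ≤ k
  · simp only [if_pos hk]
    unfold Lsum
    rw [Finset.sum_add_distrib, Finset.sum_add_distrib, Finset.sum_add_distrib,
      Finset.mul_sum, Finset.mul_sum]
  · simp only [if_neg hk]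
    unfold Lsum
    rw [Finset.sum_add_distrib, Finset.sum_add_distrib, Finset.sum_add_distrib,
      Finset.mul_sum, Finset.mul_sum]
    simp

lemma main_id : ∀ m k, Lsum m k = (SPF (2*m - k) k).card := by
  intro m
  induction m with
  | zero =>
    intro k
    have : 2 * 0 - k = 0 := by omega
    rw [this, SPF]
    unfold Lsum FP
    cases k with
    | zero => simp [fheight]
    | succ k' => simp [fheight, Nat.choose_eq_zero_of_lt]
  | succ m IH =>
    intro k
    rcases le_or_gt k (2*m+1) with hk | hk
    · rw [show 2*(m+1) - k = (2*m+1-k)+1 from by omega, SPF_card, Lsum_rec]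
      have e1 : (if 1 ≤ k then (SPF (2*m+1-k) (k-1)).card else 0) =
          (if 1 ≤ k then Lsum m (k-1) else 0) := by
        split
        · rw [show 2*m+1-k = 2*m - (k-1) from by omega, ← IH]
        · rfl
      have e2 : (if 1 ≤ 2*m+1-k then (SPF (2*m+1-k-1) k).card else 0) = Lsum m k := by
        split
        · rw [show 2*m+1-k-1 = 2*m-k from by omega, ← IH]
        · rw [Lsum_zero (by omega)]
      have e3 : (if 2 ≤ 2*m+1-k then (SPF (2*m+1-k-2) (k+1)).card else 0) =
          Lsum m (k+1) := by
        split
        · rw [show 2*m+1-k-2 = 2*m-(k+1) from by omega, ← IH]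
        · rw [Lsum_zero (by omega)]
      have e4 : (if 3 ≤ 2*m+1-k then (SPF (2*m+1-k-3) (k+2)).card else 0) =
          Lsum m (k+2) := by
        split
        · rw [show 2*m+1-k-3 = 2*m-(k+2) from by omega, ← IH]
        · rw [Lsum_zero (by omega)]
      rw [e1, e2, e3, e4]
      split <;> ring
    · rw [show 2*(m+1) - k = 0 from by omega, SPF]
      rw [if_neg (by omega), Lsum_zero (by omega)]
      simp
/-! ### Assembly -/

lemma SchP_eq_DSet (n : ℕ) : SchP n = DSet (2*n) 0 := by
  ext P
  unfold SchP IsSchroder DSet swd shgt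
  simp only [Set.mem_setOf_eq, Nat.cast_zero]
  constructor
  · rintro ⟨⟨h1, h2, h3⟩, h4⟩
    exact ⟨h4, h3, h1, h2⟩
  · rintro ⟨h4, h3, h1, h2⟩
    exact ⟨⟨h1, h2, h3⟩, h4⟩

lemma DSet_eq_SPF (w h : ℕ) : DSet w h = ↑(SPF w h) := by
  ext P
  rw [Finset.mem_coe, mem_SPF]

lemma Lsum_zero_k (m : ℕ) : Lsum m 0 = (FP m).card := by
  unfold Lsum
  rw [Finset.card_eq_sum_ones]
  exact Finset.sum_congr rfl fun Q _ => Nat.choose_zero_right _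

lemma totals (n : ℕ) : (SchP n).ncard = (FPaths n).ncard := by
  rw [SchP_eq_DSet, DSet_eq_SPF, Set.ncard_coe_finset, FPaths_eq, Set.ncard_coe_finset,
    ← Lsum_zero_k, main_id]
  norm_num

lemma swd_suffix_le {L P : List SStep} (h : L <:+ P) : swd L ≤ swd P := by
  obtain ⟨s, rfl⟩ := h
  simp [swd]

lemma SchP_suffix_empty {n : ℕ} {L : List SStep} (hL : 2*n < swd L) :
    {P ∈ SchP n | L <:+ P} = ∅ := by
  ext P
  simp only [Set.mem_setOf_eq, Set.mem_empty_iff_false, iff_false, not_and]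
  intro hP hs
  have h1 : swd P = 2*n := hP.1.1
  have := swd_suffix_le hs
  omega

lemma FPaths_zero_mem {Q : List (ℤ×ℤ)} (h : Q ∈ FPaths 0) : Q = [] :=
  List.length_eq_zero_iff.mp h.1

/-- S-side class description. -/
lemma Sclass_eq {n w : ℕ} {h : ℕ} (L : List SStep)
    (hiff : ∀ P : List SStep, P ++ L ∈ DSet (2*n) 0 ↔ P ∈ DSet w h) :
    {P ∈ SchP n | L <:+ P} = (fun P => P ++ L) '' DSet w h := by
  ext P
  simp only [Set.mem_setOf_eq, Set.mem_image]
  constructor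
  · rintro ⟨hP, t, rfl⟩
    rw [SchP_eq_DSet] at hP
    exact ⟨t, (hiff t).mp hP, rfl⟩
  · rintro ⟨t, ht, rfl⟩
    refine ⟨?_, t, rfl⟩
    rw [SchP_eq_DSet]
    exact (hiff t).mpr ht

lemma Sclass_ncard {n w : ℕ} {h : ℕ} (L : List SStep)
    (hiff : ∀ P : List SStep, P ++ L ∈ DSet (2*n) 0 ↔ P ∈ DSet w h) :
    {P ∈ SchP n | L <:+ P}.ncard = (SPF w h).card := by
  rw [Sclass_eq L hiff, Set.ncard_image_of_injective _ (inj_concat L), DSet_eq_SPF,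
    Set.ncard_coe_finset]

/-- F-side class description. -/
lemma Fclass_ncard (m k : ℕ) (p : ℤ×ℤ → Prop) [DecidablePred p]
    (hcard : ∀ H : ℕ, ((stepsF H).filter (fun s => p s)).card = H.choose k) :
    {Q | Q ∈ FPaths (m+1) ∧ ∃ s, p s ∧ Q.getLast? = some s}.ncard = Lsum m k := by
  have hset : {Q | Q ∈ FPaths (m+1) ∧ ∃ s, p s ∧ Q.getLast? = some s} =
      ↑((FP m).biUnion fun Q => ((stepsF (fheight Q).toNat).filter (fun s => p s)).image
        fun s => Q ++ [s]) := by
    ext Q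
    simp only [Set.mem_setOf_eq, Finset.coe_biUnion, Set.mem_iUnion, Finset.mem_coe,
      Finset.mem_image, Finset.mem_filter]
    constructor
    · rintro ⟨hQ, s, hp, hlast⟩
      rcases List.eq_nil_or_concat Q with rfl | ⟨Q', s', rfl⟩
      · exact absurd hQ.1 (by simp)
      rw [List.concat_eq_append] at hQ hlast ⊢
      rw [List.getLast?_concat] at hlast
      obtain rfl : s = s' := by injection hlast with hl; exact hl.symm
      obtain ⟨hlen, hpath⟩ := hQ
      rw [isFPath_concat] at hpath
      obtain ⟨hQ', hs, hh⟩ := hpath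
      have hQm : Q' ∈ FPaths m := ⟨by simpa using hlen, hQ'⟩
      have hnn : 0 ≤ fheight Q' := fheight_nonneg hQm
      refine ⟨Q', by rw [← Finset.mem_coe, ← FPaths_eq]; exact hQm, s, ⟨?_, hp⟩, rfl⟩
      rw [mem_stepsF]
      rcases hs with rfl | ⟨h1, h2⟩
      · exact Or.inl rfl
      · exact Or.inr ⟨h1, h2, by omega⟩
    · rintro ⟨Q', hQ', s, ⟨hs, hp⟩, rfl⟩
      have hQm : Q' ∈ FPaths m := by rw [FPaths_eq]; exact hQ'
      have hnn : 0 ≤ fheight Q' := fheight_nonneg hQm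
      rw [mem_stepsF] at hs
      refine ⟨⟨by simp [hQm.1], ?_⟩, s, hp, List.getLast?_concat⟩
      rw [isFPath_concat]
      refine ⟨hQm.2, ?_, ?_⟩
      · rcases hs with rfl | ⟨h1, h2, _⟩
        · exact Or.inl rfl
        · exact Or.inr ⟨h1, h2⟩
      · rcases hs with rfl | ⟨h1, h2, h3⟩
        · simp; omega
        · omega
  rw [hset, Set.ncard_coe_finset]
  rw [Finset.card_biUnion]
  · unfold Lsum
    apply Finset.sum_congr rfl
    intro Q hQ
    rw [Finset.card_image_of_injective _ (fun a b hab => by simpa using hab)]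
    exact hcard _
  · intro x hx y hy hxy
    rw [Function.onFun, Finset.disjoint_left]
    rintro z hz hz'
    simp only [Finset.mem_image, Finset.mem_filter] at hz hz'
    obtain ⟨s, -, rfl⟩ := hz
    obtain ⟨t, -, hy'⟩ := hz'
    exact hxy ((List.append_inj' hy' rfl).1.symm)
/-! ### Filter cards -/

lemma filt1 (H : ℕ) :
    ((stepsF H).filter (fun s => s = ((0:ℤ),(1:ℤ)))).card = H.choose 0 := by
  rw [Nat.choose_zero_right]
  have e : (stepsF H).filter (fun s => s = ((0:ℤ),(1:ℤ))) = {((0:ℤ),(1:ℤ))} := by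
    ext s
    simp only [Finset.mem_filter, Finset.mem_singleton]
    constructor
    · rintro ⟨-, h⟩; exact h
    · rintro rfl; exact ⟨mem_stepsF.mpr (Or.inl rfl), rfl⟩
  rw [e, Finset.card_singleton]

lemma filt2 (H : ℕ) :
    ((stepsF H).filter (fun s => s = ((1:ℤ),(1:ℤ)))).card = H.choose 0 := by
  rw [Nat.choose_zero_right]
  have e : (stepsF H).filter (fun s => s = ((1:ℤ),(1:ℤ))) = {((1:ℤ),(1:ℤ))} := by
    ext s
    simp only [Finset.mem_filter, Finset.mem_singleton]
    constructor
    · rintro ⟨-, h⟩; exact h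
    · rintro rfl
      exact ⟨mem_stepsF.mpr (Or.inr (by norm_num)), rfl⟩
  rw [e, Finset.card_singleton]

lemma filt3 (H : ℕ) :
    ((stepsF H).filter (fun s => 2 ≤ s.1 ∧ s.2 = 1)).card = H.choose 1 := by
  rw [Nat.choose_one_right]
  have e : (stepsF H).filter (fun s => 2 ≤ s.1 ∧ s.2 = 1) =
      (Finset.Icc (2:ℤ) ((H:ℤ)+1)).image (fun a => (a, (1:ℤ))) := by
    ext s
    simp only [Finset.mem_filter, Finset.mem_image, Finset.mem_Icc]
    constructor
    · rintro ⟨hs, h2, h1⟩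
      rcases mem_stepsF.mp hs with rfl | ⟨ha, hb, hH⟩
      · simp at h2
      · refine ⟨s.1, ⟨h2, by omega⟩, ?_⟩
        rw [Prod.ext_iff]
        exact ⟨rfl, h1.symm⟩
    · rintro ⟨a, ⟨ha2, haH⟩, rfl⟩
      refine ⟨mem_stepsF.mpr (Or.inr ⟨by omega, le_refl _, ?_⟩), ha2, rfl⟩
      show a - 1 ≤ (H:ℤ)
      omega
  rw [e, Finset.card_image_of_injective _
    (fun a b hab => (Prod.mk.injEq _ _ _ _ ▸ hab).1), Int.card_Icc]
  omega

lemma filt4 (H : ℕ) :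
    ((stepsF H).filter (fun s => s.1 = 1 ∧ s.2 ≤ 0)).card = H.choose 1 := by
  rw [Nat.choose_one_right]
  have e : (stepsF H).filter (fun s => s.1 = 1 ∧ s.2 ≤ 0) =
      (Finset.Icc (1-(H:ℤ)) 0).image (fun b => ((1:ℤ), b)) := by
    ext s
    simp only [Finset.mem_filter, Finset.mem_image, Finset.mem_Icc]
    constructor
    · rintro ⟨hs, h1, h0⟩
      rcases mem_stepsF.mp hs with rfl | ⟨ha, hb, hH⟩
      · simp at h1
      · refine ⟨s.2, ⟨by omega, h0⟩, ?_⟩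
        rw [Prod.ext_iff]
        exact ⟨h1.symm, rfl⟩
    · rintro ⟨b, ⟨hb1, hb0⟩, rfl⟩
      refine ⟨mem_stepsF.mpr (Or.inr ⟨le_refl _, by omega, ?_⟩), rfl, hb0⟩
      show (1:ℤ) - b ≤ (H:ℤ)
      omega
  rw [e, Finset.card_image_of_injective _
    (fun a b hab => (Prod.mk.injEq _ _ _ _ ▸ hab).2), Int.card_Icc]
  omega

lemma sum_Icc_pred (H : ℕ) : ∑ m' ∈ Finset.Icc 2 H, (m' - 1) = H.choose 2 := by
  have e : ∑ m' ∈ Finset.Icc 2 H, (m' - 1) = ∑ m' ∈ Finset.range (H+1), (m' - 1) := by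
    apply Finset.sum_subset
    · intro x hx
      simp only [Finset.mem_Icc] at hx
      simp only [Finset.mem_range]
      omega
    · intro x hx hnx
      simp only [Finset.mem_range] at hx
      simp only [Finset.mem_Icc] at hnx
      omega
  rw [e, Finset.sum_range_succ']
  simp only [Nat.add_sub_cancel]
  rw [Finset.sum_range_id, Nat.choose_two_right]
  omega

lemma filt5 (H : ℕ) :
    ((stepsF H).filter (fun s => 2 ≤ s.1 ∧ s.2 ≤ 0)).card = H.choose 2 := by
  have e : (stepsF H).filter (fun s => 2 ≤ s.1 ∧ s.2 ≤ 0) =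
      (Finset.Icc 2 H).biUnion
        (fun m' => (Finset.Icc (2:ℤ) (m':ℤ)).image (fun a => (a, a - (m':ℤ)))) := by
    ext s
    simp only [Finset.mem_filter, Finset.mem_image, Finset.mem_Icc, Finset.mem_biUnion]
    constructor
    · rintro ⟨hs, h2, h0⟩
      rcases mem_stepsF.mp hs with rfl | ⟨ha, hb, hH⟩
      · simp at h2
      · refine ⟨(s.1 - s.2).toNat, ⟨by omega, by omega⟩, s.1, ⟨h2, by omega⟩, ?_⟩
        have hc : (((s.1 - s.2).toNat : ℕ) : ℤ) = s.1 - s.2 := by omega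
        rw [hc, Prod.ext_iff]
        refine ⟨rfl, ?_⟩
        show s.1 - (s.1 - s.2) = s.2
        ring
    · rintro ⟨m', ⟨hm2, hmH⟩, a, ⟨ha2, ham⟩, rfl⟩
      refine ⟨mem_stepsF.mpr (Or.inr ⟨?_, ?_, ?_⟩), ?_, ?_⟩
      · show (1:ℤ) ≤ a; omega
      · show a - (m':ℤ) ≤ 1; omega
      · show a - (a - (m':ℤ)) ≤ (H:ℤ); omega
      · show (2:ℤ) ≤ a; omega
      · show a - (m':ℤ) ≤ 0; omega
  rw [e, Finset.card_biUnion]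
  · have e2 : ∀ m' ∈ Finset.Icc 2 H,
        ((Finset.Icc (2:ℤ) (m':ℤ)).image (fun a => (a, a - (m':ℤ)))).card = m' - 1 := by
      intro m' hm
      rw [Finset.card_image_of_injective _
        (fun a b hab => (Prod.mk.injEq _ _ _ _ ▸ hab).1), Int.card_Icc]
      omega
    rw [Finset.sum_congr rfl e2, sum_Icc_pred]
  · intro x hx y hy hxy
    rw [Function.onFun, Finset.disjoint_left]
    rintro z hz hz'
    simp only [Finset.mem_image, Finset.mem_Icc] at hz hz'
    obtain ⟨p, hp, rfl⟩ := hz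
    obtain ⟨q, hq, hq'⟩ := hz'
    have h1 := (Prod.mk.injEq _ _ _ _ ▸ hq').1
    have h2 := (Prod.mk.injEq _ _ _ _ ▸ hq').2
    apply hxy
    omega
/-- Theorem 2.3: counts of Schröder paths without triple descents by their final letters
match counts of `F`-paths by their last step; consequently `|S_n| = |F_n|`. -/
theorem schroeder_Fpath_counts (n : ℕ) :
    ({P ∈ SchP n | [SStep.h] <:+ P}).ncard =
      ({Q ∈ FPaths n | Q.getLast? = some (0, 1)}).ncard ∧
    ({P ∈ SchP n | [SStep.u, SStep.d] <:+ P}).ncard =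
      ({Q ∈ FPaths n | Q.getLast? = some (1, 1)}).ncard ∧
    ({P ∈ SchP n | [SStep.h, SStep.d] <:+ P}).ncard =
      ({Q ∈ FPaths n | ∃ a : ℤ, 2 ≤ a ∧ Q.getLast? = some (a, 1)}).ncard ∧
    ({P ∈ SchP n | [SStep.u, SStep.d, SStep.d] <:+ P}).ncard =
      ({Q ∈ FPaths n | ∃ b : ℤ, b ≤ 0 ∧ Q.getLast? = some (1, b)}).ncard ∧
    ({P ∈ SchP n | [SStep.h, SStep.d, SStep.d] <:+ P}).ncard =
      ({Q ∈ FPaths n | ∃ a b : ℤ, 2 ≤ a ∧ b ≤ 0 ∧ Q.getLast? = some (a, b)}).ncard ∧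
    (SchP n).ncard = (FPaths n).ncard := by
  cases n with
  | zero =>
    have hF : ∀ (P : List (ℤ×ℤ) → Prop),
        (∀ Q, P Q → ∃ s : ℤ×ℤ, Q.getLast? = some s) →
        {Q | Q ∈ FPaths 0 ∧ P Q}.ncard = 0 := by
      intro P hP
      have e : {Q | Q ∈ FPaths 0 ∧ P Q} = ∅ := by
        ext Q
        simp only [Set.mem_setOf_eq, Set.mem_empty_iff_false, iff_false, not_and]
        intro hQ hPQ
        obtain ⟨s, hs⟩ := hP Q hPQ
        rw [FPaths_zero_mem hQ] at hs
        simp at hs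
      rw [e, Set.ncard_empty]
    have hS : ∀ (L : List SStep), 0 < swd L → {P ∈ SchP 0 | L <:+ P}.ncard = 0 := by
      intro L hL
      rw [SchP_suffix_empty (by omega), Set.ncard_empty]
    refine ⟨?_, ?_, ?_, ?_, ?_, totals 0⟩
    · rw [hS _ (by norm_num [swd, swidth]), hF _ (fun Q h => ⟨_, h⟩)]
    · rw [hS _ (by norm_num [swd, swidth]), hF _ (fun Q h => ⟨_, h⟩)]
    · rw [hS _ (by norm_num [swd, swidth]),
        hF _ (fun Q h => by obtain ⟨a, -, h⟩ := h; exact ⟨_, h⟩)]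
    · rw [hS _ (by norm_num [swd, swidth]),
        hF _ (fun Q h => by obtain ⟨b, -, h⟩ := h; exact ⟨_, h⟩)]
    · rw [hS _ (by norm_num [swd, swidth]),
        hF _ (fun Q h => by obtain ⟨a, b, -, -, h⟩ := h; exact ⟨_, h⟩)]
  | succ m =>
    have hs1 : {P ∈ SchP (m+1) | [SStep.h] <:+ P}.ncard = Lsum m 0 := by
      rw [Sclass_ncard (w := 2*m) (h := 0) [SStep.h] (fun P => by
        rw [show 2*(m+1) = 2*m + 2 from by ring]; exact D_concat_h)]
      have := main_id m 0
      rw [Nat.sub_zero] at this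
      exact this.symm
    have hs2 : {P ∈ SchP (m+1) | [SStep.u, SStep.d] <:+ P}.ncard = Lsum m 0 := by
      rw [Sclass_ncard (w := 2*m) (h := 0) [SStep.u, SStep.d] (fun P => by
        rw [show 2*(m+1) = 2*m + 2 from by ring]; exact D_concat_ud)]
      have := main_id m 0
      rw [Nat.sub_zero] at this
      exact this.symm
    have hs3 : {P ∈ SchP (m+1) | [SStep.h, SStep.d] <:+ P}.ncard = Lsum m 1 := by
      cases m with
      | zero =>
        rw [SchP_suffix_empty (by norm_num [swd, swidth]), Set.ncard_empty]
        exact (Lsum_zero (by omega)).symm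
      | succ m' =>
        rw [Sclass_ncard (w := 2*m'+1) (h := 1) [SStep.h, SStep.d] (fun P => by
          rw [show 2*(m'+1+1) = (2*m'+1) + 3 from by ring]; exact D_concat_hd)]
        have := main_id (m'+1) 1
        rw [show 2*(m'+1) - 1 = 2*m'+1 from by omega] at this
        exact this.symm
    have hs4 : {P ∈ SchP (m+1) | [SStep.u, SStep.d, SStep.d] <:+ P}.ncard = Lsum m 1 := by
      cases m with
      | zero =>
        rw [SchP_suffix_empty (by norm_num [swd, swidth]), Set.ncard_empty]
        exact (Lsum_zero (by omega)).symm
      | succ m' =>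
        rw [Sclass_ncard (w := 2*m'+1) (h := 1) [SStep.u, SStep.d, SStep.d] (fun P => by
          rw [show 2*(m'+1+1) = (2*m'+1) + 3 from by ring]; exact D_concat_udd)]
        have := main_id (m'+1) 1
        rw [show 2*(m'+1) - 1 = 2*m'+1 from by omega] at this
        exact this.symm
    have hs5 : {P ∈ SchP (m+1) | [SStep.h, SStep.d, SStep.d] <:+ P}.ncard = Lsum m 2 := by
      cases m with
      | zero =>
        rw [SchP_suffix_empty (by norm_num [swd, swidth]), Set.ncard_empty]
        exact (Lsum_zero (by omega)).symm
      | succ m' =>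
        rw [Sclass_ncard (w := 2*m') (h := 2) [SStep.h, SStep.d, SStep.d] (fun P => by
          rw [show 2*(m'+1+1) = (2*m') + 4 from by ring]; exact D_concat_hdd)]
        have := main_id (m'+1) 2
        rw [show 2*(m'+1) - 2 = 2*m' from by omega] at this
        exact this.symm
    have hf1 : {Q ∈ FPaths (m+1) | Q.getLast? = some (0, 1)}.ncard = Lsum m 0 := by
      have e : {Q ∈ FPaths (m+1) | Q.getLast? = some (0, 1)} =
          {Q | Q ∈ FPaths (m+1) ∧ ∃ s, s = ((0:ℤ),(1:ℤ)) ∧ Q.getLast? = some s} := by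
        ext Q
        simp only [Set.mem_setOf_eq]
        constructor
        · rintro ⟨h1, h2⟩; exact ⟨h1, _, rfl, h2⟩
        · rintro ⟨h1, s, rfl, h2⟩; exact ⟨h1, h2⟩
      rw [e]
      exact Fclass_ncard m 0 _ filt1
    have hf2 : {Q ∈ FPaths (m+1) | Q.getLast? = some (1, 1)}.ncard = Lsum m 0 := by
      have e : {Q ∈ FPaths (m+1) | Q.getLast? = some (1, 1)} =
          {Q | Q ∈ FPaths (m+1) ∧ ∃ s, s = ((1:ℤ),(1:ℤ)) ∧ Q.getLast? = some s} := by
        ext Q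
        simp only [Set.mem_setOf_eq]
        constructor
        · rintro ⟨h1, h2⟩; exact ⟨h1, _, rfl, h2⟩
        · rintro ⟨h1, s, rfl, h2⟩; exact ⟨h1, h2⟩
      rw [e]
      exact Fclass_ncard m 0 _ filt2
    have hf3 : {Q ∈ FPaths (m+1) | ∃ a : ℤ, 2 ≤ a ∧ Q.getLast? = some (a, 1)}.ncard =
        Lsum m 1 := by
      have e : {Q ∈ FPaths (m+1) | ∃ a : ℤ, 2 ≤ a ∧ Q.getLast? = some (a, 1)} =
          {Q | Q ∈ FPaths (m+1) ∧ ∃ s : ℤ×ℤ, (2 ≤ s.1 ∧ s.2 = 1) ∧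
            Q.getLast? = some s} := by
        ext Q
        simp only [Set.mem_setOf_eq]
        constructor
        · rintro ⟨h1, a, ha, h2⟩; exact ⟨h1, (a, 1), ⟨ha, rfl⟩, h2⟩
        · rintro ⟨h1, s, ⟨ha, hb⟩, h2⟩
          refine ⟨h1, s.1, ha, ?_⟩
          rwa [show ((s.1, (1:ℤ)) : ℤ×ℤ) = s from by
            rw [Prod.ext_iff]; exact ⟨rfl, hb.symm⟩]
      rw [e]
      exact Fclass_ncard m 1 _ filt3
    have hf4 : {Q ∈ FPaths (m+1) | ∃ b : ℤ, b ≤ 0 ∧ Q.getLast? = some (1, b)}.ncard =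
        Lsum m 1 := by
      have e : {Q ∈ FPaths (m+1) | ∃ b : ℤ, b ≤ 0 ∧ Q.getLast? = some (1, b)} =
          {Q | Q ∈ FPaths (m+1) ∧ ∃ s : ℤ×ℤ, (s.1 = 1 ∧ s.2 ≤ 0) ∧
            Q.getLast? = some s} := by
        ext Q
        simp only [Set.mem_setOf_eq]
        constructor
        · rintro ⟨h1, b, hb, h2⟩; exact ⟨h1, (1, b), ⟨rfl, hb⟩, h2⟩
        · rintro ⟨h1, s, ⟨ha, hb⟩, h2⟩
          refine ⟨h1, s.2, hb, ?_⟩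
          rwa [show (((1:ℤ), s.2) : ℤ×ℤ) = s from by
            rw [Prod.ext_iff]; exact ⟨ha.symm, rfl⟩]
      rw [e]
      exact Fclass_ncard m 1 _ filt4
    have hf5 : {Q ∈ FPaths (m+1) | ∃ a b : ℤ, 2 ≤ a ∧ b ≤ 0 ∧
        Q.getLast? = some (a, b)}.ncard = Lsum m 2 := by
      have e : {Q ∈ FPaths (m+1) | ∃ a b : ℤ, 2 ≤ a ∧ b ≤ 0 ∧ Q.getLast? = some (a, b)} =
          {Q | Q ∈ FPaths (m+1) ∧ ∃ s : ℤ×ℤ, (2 ≤ s.1 ∧ s.2 ≤ 0) ∧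
            Q.getLast? = some s} := by
        ext Q
        simp only [Set.mem_setOf_eq]
        constructor
        · rintro ⟨h1, a, b, ha, hb, h2⟩; exact ⟨h1, (a, b), ⟨ha, hb⟩, h2⟩
        · rintro ⟨h1, s, ⟨ha, hb⟩, h2⟩
          exact ⟨h1, s.1, s.2, ha, hb, by rwa [show ((s.1, s.2) : ℤ×ℤ) = s from rfl]⟩
      rw [e]
      exact Fclass_ncard m 2 _ filt5
    exact ⟨by rw [hs1, hf1], by rw [hs2, hf2], by rw [hs3, hf3], by rw [hs4, hf4],
      by rw [hs5, hf5], totals (m+1)⟩
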